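/- Let a₁₁, a₁₂, a₂₁, a₂₂ : ℝ → ℍ and let q₁, q₂ : ℝ → ℍ be differentiable functions with q₂(t) ≠ 0 for all t, satisfying the linear system q₁'(t) = a₁₁(t)·q₁(t) + a₁₂(t)·q₂(t) and q₂'(t) = −a₂₁(t)·q₁(t) − a₂₂(t)·q₂(t). Then q(t) := q₁(t) * (q₂(t))⁻¹ is differentiable and satisfies the quaternionic Riccati equation q'(t) = a₁₂(t) + a₁₁(t)·q(t) + q(t)·a₂₂(t) + q(t)·a₂₁(t)·q(t) for all t ∈ ℝ. -/

import Mathlib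

open scoped Quaternion

/-- Projection of a linear system on `ℍ² \ {0}` to the quaternionic Riccati equation:
if `(q₁, q₂)` solves the linear system and `q₂` never vanishes, then `q = q₁ q₂⁻¹`
solves `q' = a₁₂ + a₁₁ q + q a₂₂ + q a₂₁ q`. -/
theorem quaternion_linear_system_projects_to_riccati
    (a₁₁ a₁₂ a₂₁ a₂₂ : ℝ → ℍ[ℝ]) (q₁ q₂ : ℝ → ℍ[ℝ])
    (hq₂ : ∀ t, q₂ t ≠ 0)
    (h₁ : ∀ t, HasDerivAt q₁ (a₁₁ t * q₁ t + a₁₂ t * q₂ t) t)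
    (h₂ : ∀ t, HasDerivAt q₂ (-(a₂₁ t * q₁ t) - a₂₂ t * q₂ t) t) :
    ∀ t, HasDerivAt (fun t => q₁ t * (q₂ t)⁻¹)
      (a₁₂ t + a₁₁ t * (q₁ t * (q₂ t)⁻¹) + (q₁ t * (q₂ t)⁻¹) * a₂₂ t
        + (q₁ t * (q₂ t)⁻¹) * a₂₁ t * (q₁ t * (q₂ t)⁻¹)) t := by
  intro t
  set u : ℍ[ℝ]ˣ := Units.mk0 (q₂ t) (hq₂ t) with hu
  have hinvF := hasFDerivAt_ringInverse (𝕜 := ℝ) (R := ℍ[ℝ]) u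
  have hinv : HasDerivAt (fun s => Ring.inverse (q₂ s))
      (-((q₂ t)⁻¹ * (-(a₂₁ t * q₁ t) - a₂₂ t * q₂ t) * (q₂ t)⁻¹)) t := by
    have := hinvF.comp_hasDerivAt t (h₂ t)
    simp only [hu, Ring.inverse_eq_inv] at this
    exact this
  have hinv' : HasDerivAt (fun s => (q₂ s)⁻¹)
      (-((q₂ t)⁻¹ * (-(a₂₁ t * q₁ t) - a₂₂ t * q₂ t) * (q₂ t)⁻¹)) t := by
    simpa [Ring.inverse_eq_inv] using hinv
  have hmul := (h₁ t).mul hinv'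
  refine hmul.congr_deriv ?_
  symm
  have hc : q₂ t * (q₂ t)⁻¹ = 1 := mul_inv_cancel₀ (hq₂ t)
  simp only [mul_sub, sub_mul, mul_neg, neg_mul, neg_neg, mul_add, add_mul, mul_assoc, hc,
    mul_one, neg_sub]
  abel
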